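/- Every submodular ε-modular set function is (ε/2)-linear. That is, if f is a set function over n items satisfying f(S)+f(T) ≥ f(S∪T)+f(S∩T) for every two sets S,T ⊆ U, and |f(S)+f(T)−f(S∪T)−f(S∩T)| ≤ ε for every two sets S,T ⊆ U, then there exists a linear set function g with |f(S)−g(S)| ≤ ε/2 for every set S ⊆ U. -/

import Mathlib

open Finset

/-- `f` is ε-modular: the modularity equation holds up to ε for all pairs of sets. -/
def IsModular {n : ℕ} (f : Finset (Fin n) → ℝ) (ε : ℝ) : Prop :=
  ∀ S T : Finset (Fin n), |f S + f T - f (S ∪ T) - f (S ∩ T)| ≤ ε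

/-- `f` is submodular. -/
def IsSubmodular {n : ℕ} (f : Finset (Fin n) → ℝ) : Prop :=
  ∀ S T : Finset (Fin n), f (S ∪ T) + f (S ∩ T) ≤ f S + f T

/-- `f` is linear: `f(S) = c₀ + ∑_{i ∈ S} cᵢ` for some constants. -/
def IsLinear {n : ℕ} (f : Finset (Fin n) → ℝ) : Prop :=
  ∃ (c₀ : ℝ) (c : Fin n → ℝ), ∀ S : Finset (Fin n), f S = c₀ + ∑ i ∈ S, c i

/-- `f` is Δ-linear: there is a linear function within additive distance Δ of `f`. -/
def IsCloseLinear {n : ℕ} (f : Finset (Fin n) → ℝ) (Δ : ℝ) : Prop :=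
  ∃ g : Finset (Fin n) → ℝ, IsLinear g ∧ ∀ S : Finset (Fin n), |f S - g S| ≤ Δ

/-- Every submodular ε-modular set function is (ε/2)-linear. -/
theorem submodular_modular_implies_half_eps_linear {n : ℕ} (f : Finset (Fin n) → ℝ) (ε : ℝ)
    (hsub : IsSubmodular f) (hmod : IsModular f ε) : IsCloseLinear f (ε / 2) := by
  classical
  set c : Fin n → ℝ := fun i => f (Finset.Iic i) - f (Finset.Iio i) with hc
  -- upper bound: ∑_{i∈S} c i ≤ f S - f ∅
  have key : ∀ S : Finset (Fin n), ∑ i ∈ S, c i ≤ f S - f ∅ := by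
    intro S
    induction S using Finset.induction_on_max with
    | empty => simp
    | insert a s ha ih =>
      have hans : a ∉ s := fun h => lt_irrefl a (ha a h)
      rw [Finset.sum_insert hans]
      have h1 : insert a s ∪ Finset.Iio a = Finset.Iic a := by
        ext x
        simp only [Finset.mem_union, Finset.mem_insert, Finset.mem_Iio, Finset.mem_Iic]
        constructor
        · rintro ((rfl | hx) | hx)
          · exact le_refl x
          · exact le_of_lt (ha x hx)
          · exact le_of_lt hx
        · intro hx
          rcases lt_or_eq_of_le hx with h | h
          · exact Or.inr h
          · exact Or.inl (Or.inl h)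
      have h2 : insert a s ∩ Finset.Iio a = s := by
        ext x
        simp only [Finset.mem_inter, Finset.mem_insert, Finset.mem_Iio]
        constructor
        · rintro ⟨rfl | hx, hlt⟩
          · exact absurd hlt (lt_irrefl x)
          · exact hx
        · intro hx
          exact ⟨Or.inr hx, ha x hx⟩
      have := hsub (insert a s) (Finset.Iio a)
      rw [h1, h2] at this
      have hca : c a ≤ f (insert a s) - f s := by
        simp only [hc]
        linarith
      linarith
  -- telescoping: total sum equals f univ - f ∅
  have htot : ∑ i : Fin n, c i = f Finset.univ - f ∅ := by
    set G : ℕ → ℝ := fun k => f (Finset.univ.filter (fun x : Fin n => (x : ℕ) < k)) with hGdef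
    have hG : ∀ i : Fin n, c i = G ((i : ℕ) + 1) - G (i : ℕ) := by
      intro i
      have e1 : Finset.Iic i = Finset.univ.filter (fun x : Fin n => (x : ℕ) < (i : ℕ) + 1) := by
        ext x
        simp only [Finset.mem_filter, Finset.mem_univ, true_and, Finset.mem_Iic, Fin.le_def]
        omega
      have e2 : Finset.Iio i = Finset.univ.filter (fun x : Fin n => (x : ℕ) < (i : ℕ)) := by
        ext x
        simp only [Finset.mem_filter, Finset.mem_univ, true_and, Finset.mem_Iio, Fin.lt_def]
      simp only [hc, hGdef, e1, e2]
    have hsum : ∑ i : Fin n, c i = ∑ k ∈ Finset.range n, (G (k + 1) - G k) := by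
      rw [← Fin.sum_univ_eq_sum_range (fun k => G (k + 1) - G k) n]
      exact Finset.sum_congr rfl fun i _ => hG i
    have h0 : G 0 = f ∅ := by
      have : Finset.univ.filter (fun x : Fin n => (x : ℕ) < 0) = (∅ : Finset (Fin n)) := by
        ext x; simp
      simp only [hGdef, this]
    have hn : G n = f Finset.univ := by
      have : Finset.univ.filter (fun x : Fin n => (x : ℕ) < n) = (Finset.univ : Finset (Fin n)) := by
        ext x; simp [x.isLt]
      simp only [hGdef, this]
    rw [hsum, Finset.sum_range_sub G n, h0, hn]
  -- lower bound
  have key2 : ∀ S : Finset (Fin n), f S - f ∅ - ε ≤ ∑ i ∈ S, c i := by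
    intro S
    have hcompl : ∑ i ∈ S, c i + ∑ i ∈ Sᶜ, c i = ∑ i : Fin n, c i :=
      Finset.sum_add_sum_compl S c
    have h1 := key Sᶜ
    have h2 := hmod S Sᶜ
    rw [Finset.union_compl, Finset.inter_compl] at h2
    have h3 : f S + f Sᶜ - f Finset.univ - f ∅ ≤ ε := (abs_le.mp h2).2
    linarith
  refine ⟨fun S => (f ∅ + ε / 2) + ∑ i ∈ S, c i, ⟨f ∅ + ε / 2, c, fun S => rfl⟩, ?_⟩
  intro S
  have h1 := key S
  have h2 := key2 S
  rw [abs_le]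
  constructor <;> linarith
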